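/- The closure of the graph of the polar map is an irreducible component of Z_f: With notation as in the context, the vanishing ideal P := I(Γ) ⊆ T of the set Γ is a prime ideal of T, and P is a minimal prime over the ideal I_{Z_f}; equivalently, the Zariski closure of Γ (the affine cone over the closure S_f of the graph of the polar map ∇f : ℙⁿ ⇢ ℙⁿ) is an irreducible component of the zero set of I_{Z_f} (the affine cone over Z_f). -/

import Mathlib

open MvPolynomial

noncomputable section

/-- The ideal `I_{Z_f}` of `T = ℂ[x_0,…,x_n,y_0,…,y_n]` generated by the bihomogeneous
forms `∑ a_i(x)·y_i` as `a` ranges over the Jacobian syzygies of `f`. -/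
def idealZf (n : ℕ) (f : MvPolynomial (Fin (n + 1)) ℂ) :
    Ideal (MvPolynomial (Fin (n + 1) ⊕ Fin (n + 1)) ℂ) :=
  Ideal.span {g | ∃ a : Fin (n + 1) → MvPolynomial (Fin (n + 1)) ℂ,
    (∑ i, a i * pderiv i f = 0) ∧
    g = ∑ i, rename Sum.inl (a i) * X (Sum.inr i)}

/-- The affine cone over the graph of the polar map `∇f`: the set
`Γ = {(x, t·∇f(x)) : x ∈ ℂ^{n+1}, t ∈ ℂ} ⊆ ℂ^{2(n+1)}`. -/
def polarGraphCone (n : ℕ) (f : MvPolynomial (Fin (n + 1)) ℂ) :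
    Set ((Fin (n + 1) ⊕ Fin (n + 1)) → ℂ) :=
  {z | ∃ (x : Fin (n + 1) → ℂ) (t : ℂ),
    z = Sum.elim x fun i => t * eval x (pderiv i f)}

/-- Substitution homomorphism `x_i ↦ x_i`, `y_i ↦ t·∂f/∂x_i`. -/
def polarHom (n : ℕ) (f : MvPolynomial (Fin (n + 1)) ℂ) :
    MvPolynomial (Fin (n + 1) ⊕ Fin (n + 1)) ℂ →ₐ[ℂ]
      MvPolynomial (Fin (n + 1) ⊕ Unit) ℂ :=
  aeval (Sum.elim (fun i => X (Sum.inl i))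
    (fun i => X (Sum.inr ()) * rename Sum.inl (pderiv i f)))

lemma eval_polarHom (n : ℕ) (f : MvPolynomial (Fin (n + 1)) ℂ)
    (g : MvPolynomial (Fin (n + 1) ⊕ Fin (n + 1)) ℂ) (x : Fin (n + 1) → ℂ) (t : ℂ) :
    eval (Sum.elim x fun _ : Unit => t) (polarHom n f g)
      = eval (Sum.elim x fun i => t * eval x (pderiv i f)) g := by
  rw [polarHom, aeval_def, eval₂_comp_left (eval (Sum.elim x fun _ : Unit => t)),
    MvPolynomial.algebraMap_eq]
  have h1 : (eval (Sum.elim x fun _ : Unit => t)).comp (C : ℂ →+* _) = RingHom.id ℂ :=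
    RingHom.ext fun a => by simp
  rw [h1]
  have h2 : (eval (Sum.elim x fun _ : Unit => t)) ∘
      (Sum.elim (fun i => (X (Sum.inl i) : MvPolynomial (Fin (n + 1) ⊕ Unit) ℂ))
        (fun i => X (Sum.inr ()) * rename Sum.inl (pderiv i f)))
      = Sum.elim x fun i => t * eval x (pderiv i f) := by
    funext s
    cases s with
    | inl i => simp
    | inr i =>
      simp only [Function.comp_apply, Sum.elim_inr, eval_mul, eval_X, eval_rename]
      congr 1
  rw [h2]
  rfl

lemma mem_vanishingIdeal_polarGraphCone (n : ℕ) (f : MvPolynomial (Fin (n + 1)) ℂ)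
    (g : MvPolynomial (Fin (n + 1) ⊕ Fin (n + 1)) ℂ) :
    g ∈ vanishingIdeal ℂ (polarGraphCone n f) ↔ polarHom n f g = 0 := by
  constructor
  · intro hg
    apply MvPolynomial.funext (q := 0)
    intro w
    rw [map_zero]
    have hw : w = Sum.elim (w ∘ Sum.inl) (fun _ : Unit => w (Sum.inr ())) := by
      funext s
      cases s with
      | inl i => rfl
      | inr u => cases u; rfl
    rw [hw, eval_polarHom]
    simpa only [MvPolynomial.aeval_eq_eval] using mem_vanishingIdeal_iff.mp hg _ ⟨w ∘ Sum.inl, w (Sum.inr ()), rfl⟩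
  · intro h0
    rw [mem_vanishingIdeal_iff]
    rintro z ⟨x, t, rfl⟩
    rw [MvPolynomial.aeval_eq_eval, ← eval_polarHom, h0, map_zero]

lemma pderiv_ne_zero_of_coeff {σ : Type*} [DecidableEq σ] {f : MvPolynomial σ ℂ}
    {s : σ →₀ ℕ} {i : σ} (hs : coeff s f ≠ 0) (hi : s i ≠ 0) : pderiv i f ≠ 0 := by
  intro h0
  have expand : pderiv i f
      = ∑ m ∈ f.support, monomial (m - Finsupp.single i 1) (coeff m f * m i) := by
    conv_lhs => rw [f.as_sum]
    rw [map_sum]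
    simp_rw [pderiv_monomial]
  have hco : coeff (s - Finsupp.single i 1) (pderiv i f) = coeff s f * s i := by
    rw [expand, coeff_sum]
    rw [Finset.sum_eq_single s]
    · rw [coeff_monomial, if_pos rfl]
    · intro b hb hbs
      rw [coeff_monomial]
      split_ifs with h
      · rcases Nat.eq_zero_or_pos (b i) with h0' | h1'
        · simp [h0']
        · exfalso
          apply hbs
          ext j
          have hj := DFunLike.congr_fun h j
          rw [Finsupp.tsub_apply, Finsupp.tsub_apply] at hj
          rcases eq_or_ne j i with rfl | hji
          · rw [Finsupp.single_eq_same] at hj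
            omega
          · rwa [Finsupp.single_eq_of_ne' (Ne.symm hji), Nat.sub_zero, Nat.sub_zero] at hj
      · rfl
    · intro hs'
      exact absurd (MvPolynomial.mem_support_iff.mpr hs) hs'
  rw [h0, coeff_zero] at hco
  have : (s i : ℂ) ≠ 0 := Nat.cast_ne_zero.mpr hi
  exact hs (by
    have := hco.symm
    rcases mul_eq_zero.mp this with h | h
    · exact h
    · exact absurd h ‹(s i : ℂ) ≠ 0›)

lemma exists_pderiv_ne_zero {n d : ℕ} (hd : 1 ≤ d) {f : MvPolynomial (Fin (n + 1)) ℂ}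
    (hf : f ≠ 0) (hhom : f.IsHomogeneous d) : ∃ i, pderiv i f ≠ 0 := by
  obtain ⟨s, hs⟩ := MvPolynomial.support_nonempty.mpr hf
  rw [MvPolynomial.mem_support_iff] at hs
  have hsd : s.degree = d := by
    by_contra h
    exact hs (hhom.coeff_eq_zero h)
  have hs0 : s ≠ 0 := by
    intro h
    rw [h] at hsd
    simp [Finsupp.degree] at hsd
    omega
  obtain ⟨i, hi⟩ := Finsupp.ne_iff.mp hs0
  rw [Finsupp.coe_zero, Pi.zero_apply] at hi
  exact ⟨i, pderiv_ne_zero_of_coeff hs hi⟩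

lemma koszul_mem_idealZf (n : ℕ) (f : MvPolynomial (Fin (n + 1)) ℂ) (i j : Fin (n + 1)) :
    rename Sum.inl (pderiv j f) * X (Sum.inr i)
      - rename Sum.inl (pderiv i f) * X (Sum.inr j) ∈ idealZf n f := by
  apply Ideal.subset_span
  refine ⟨fun k => (if k = i then pderiv j f else 0) - (if k = j then pderiv i f else 0),
    ?_, ?_⟩
  · simp_rw [sub_mul, Finset.sum_sub_distrib, ite_mul, zero_mul, Finset.sum_ite_eq',
      Finset.mem_univ, if_true]
    ring
  · simp_rw [map_sub, sub_mul, Finset.sum_sub_distrib, apply_ite (rename Sum.inl),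
      map_zero, ite_mul, zero_mul, Finset.sum_ite_eq', Finset.mem_univ, if_true]

/-- **The closure of the graph of the polar map is an irreducible component of `Z_f`.**
The vanishing ideal `P = I(Γ)` of the cone over the graph of the polar map is a prime ideal
of `T`, and it is a minimal prime over `I_{Z_f}`; i.e. the Zariski closure of `Γ` (the cone
over `S_f`) is an irreducible component of the zero set of `I_{Z_f}` (the cone over `Z_f`). -/
theorem polarGraph_irreducible_component (n d : ℕ) (hn : 1 ≤ n) (hd : 1 ≤ d)
    (f : MvPolynomial (Fin (n + 1)) ℂ) (hsf : Squarefree f) (hhom : f.IsHomogeneous d) :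
    (vanishingIdeal ℂ (polarGraphCone n f)).IsPrime ∧
      vanishingIdeal ℂ (polarGraphCone n f) ∈ (idealZf n f).minimalPrimes := by
  have hPeq : vanishingIdeal ℂ (polarGraphCone n f) = RingHom.ker (polarHom n f) := by
    ext g
    rw [RingHom.mem_ker]
    exact mem_vanishingIdeal_polarGraphCone n f g
  have hPprime : (vanishingIdeal ℂ (polarGraphCone n f)).IsPrime := by
    rw [hPeq]
    exact RingHom.ker_isPrime _
  have hIP : idealZf n f ≤ vanishingIdeal ℂ (polarGraphCone n f) := by
    rw [idealZf, Ideal.span_le]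
    rintro g ⟨a, ha, rfl⟩
    rw [SetLike.mem_coe, mem_vanishingIdeal_iff]
    rintro z ⟨x, t, rfl⟩
    rw [MvPolynomial.aeval_eq_eval, map_sum]
    have hcx : (Sum.elim x fun i => t * eval x (pderiv i f)) ∘ Sum.inl = x := by
      funext i; rfl
    have hterm : ∀ i : Fin (n + 1),
        eval (Sum.elim x fun i => t * eval x (pderiv i f))
          (rename Sum.inl (a i) * X (Sum.inr i))
        = t * eval x (a i * pderiv i f) := by
      intro i
      rw [eval_mul, eval_X, eval_rename, hcx, Sum.elim_inr, eval_mul]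
      ring
    simp_rw [hterm]
    rw [← Finset.mul_sum, ← map_sum, ha, map_zero, mul_zero]
  obtain ⟨i₀, hi₀⟩ := exists_pderiv_ne_zero hd hsf.ne_zero hhom
  have hhP : (rename Sum.inl (pderiv i₀ f) :
      MvPolynomial (Fin (n + 1) ⊕ Fin (n + 1)) ℂ) ∉ vanishingIdeal ℂ (polarGraphCone n f) := by
    intro hmem
    apply hi₀
    apply MvPolynomial.funext (q := 0)
    intro x
    rw [map_zero]
    have hz : (Sum.elim x fun i => (0 : ℂ) * eval x (pderiv i f)) ∈ polarGraphCone n f :=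
      ⟨x, 0, rfl⟩
    have hv := mem_vanishingIdeal_iff.mp hmem _ hz
    rw [MvPolynomial.aeval_eq_eval, eval_rename] at hv
    have hcx : (Sum.elim x fun i => (0 : ℂ) * eval x (pderiv i f)) ∘ Sum.inl = x := by
      funext i; rfl
    rwa [hcx] at hv
  refine ⟨hPprime, ⟨⟨hPprime, hIP⟩, ?_⟩⟩
  rintro Q ⟨hQprime, hIQ⟩ hQP
  intro g hg
  have key : g * rename Sum.inl (pderiv i₀ f) ∈ Q := by
    have hrad : g * rename Sum.inl (pderiv i₀ f) ∈ Q.radical := by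
      rw [← vanishingIdeal_zeroLocus_eq_radical (K := ℂ), mem_vanishingIdeal_iff]
      intro z hz
      rw [mem_zeroLocus_iff] at hz
      rw [MvPolynomial.aeval_eq_eval]
      by_cases hx : ∀ i, eval (z ∘ Sum.inl) (pderiv i f) = 0
      · rw [eval_mul, eval_rename, hx i₀, mul_zero]
      · push_neg at hx
        obtain ⟨i₁, hi₁⟩ := hx
        have hzΓ : z ∈ polarGraphCone n f := by
          refine ⟨z ∘ Sum.inl,
            z (Sum.inr i₁) / eval (z ∘ Sum.inl) (pderiv i₁ f), ?_⟩
          funext s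
          cases s with
          | inl i => rfl
          | inr j =>
            have hk := hz _ (hIQ (koszul_mem_idealZf n f i₁ j))
            rw [MvPolynomial.aeval_eq_eval, map_sub, eval_mul, eval_mul, eval_X, eval_X, eval_rename, eval_rename,
              sub_eq_zero] at hk
            rw [Sum.elim_inr]
            field_simp
            linear_combination -hk
        rw [eval_mul, (show eval z g = 0 by simpa only [MvPolynomial.aeval_eq_eval] using mem_vanishingIdeal_iff.mp hg z hzΓ), zero_mul]
    rwa [hQprime.radical] at hrad
  rcases hQprime.mem_or_mem key with h1 | h2
  · exact h1
  · exact absurd (hQP h2) hhP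

end
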